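/- Let μ > 0, σ > 0, ε > 0, and let τ ≤ t be nonnegative integers. Suppose X_{τ+1},…,X_t are i.i.d. N(μ, σ²) with partial sums S_k (S_0 = 0), and define the CUSUM quantities V_{t,k} = (S_t − S_k − (μ/2)(t−k))·μ. Then P(max_{τ≤k≤t} V_{t,k} ≥ V_{t,τ} + ε) ≤ Σ_{m=1}^{t−τ} Φ(−μ√m/(2σ)) ≤ (1/2)·e^{−μ²/(8σ²)}/(1 − e^{−μ²/(8σ²)}), where Φ is the standard normal cumulative distribution function. -/

import Mathlib

open MeasureTheory ProbabilityTheory Filter Real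

noncomputable section

/-- Standard normal CDF Φ. -/
def stdCDF (x : ℝ) : ℝ := ((gaussianReal 0 1) (Set.Iic x)).toReal

/-- Partial sums of a path: `pS X 0 = 0`, `pS X t = X 1 + ⋯ + X t`. -/
def pS (X : ℕ → ℝ) (t : ℕ) : ℝ := ∑ i ∈ Finset.Icc 1 t, X i

/-- CUSUM quantity `V_{t,k}` with drift parameter μ. -/
def cusumV (μ : ℝ) (X : ℕ → ℝ) (t k : ℕ) : ℝ :=
  (pS X t - pS X k - μ / 2 * ((t : ℝ) - (k : ℝ))) * μ

open scoped NNReal ENNReal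

lemma sqrt_const_ident (V W : ℝ) (hV : 0 < V) (hW : 0 < W) :
    (√(2 * π * V))⁻¹ * (√(2 * π * W))⁻¹ * √(π / ((V + W) / (2 * V * W)))
      = (√(2 * π * (V + W)))⁻¹ := by
  have hπ := Real.pi_pos
  have hVW : 0 < V + W := by linarith
  have h1 : π / ((V + W) / (2 * V * W)) = (2 * π * V) * (2 * π * W) / (2 * π * (V + W)) := by
    field_simp
  have e1 : 0 < √(2 * π * V) := Real.sqrt_pos.2 (by positivity)
  have e2 : 0 < √(2 * π * W) := Real.sqrt_pos.2 (by positivity)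
  have e3 : 0 < √(2 * π * (V + W)) := Real.sqrt_pos.2 (by positivity)
  rw [h1, Real.sqrt_div (by positivity), Real.sqrt_mul (by positivity)]
  field_simp
  rw [← Real.sqrt_mul (by positivity : (0:ℝ) ≤ 2 * π) V,
    ← Real.sqrt_mul (by positivity : (0:ℝ) ≤ 2 * π * V)]
  congr 1; ring

lemma gaussianPDFReal_conv (a b : ℝ) (v w : ℝ≥0) (hv : v ≠ 0) (hw : w ≠ 0) (z : ℝ) :
    ∫ x, gaussianPDFReal a v x * gaussianPDFReal b w (z - x) =
      gaussianPDFReal (a + b) (v + w) z := by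
  have hV : 0 < (v : ℝ) := by exact_mod_cast pos_iff_ne_zero.2 hv
  have hW : 0 < (w : ℝ) := by exact_mod_cast pos_iff_ne_zero.2 hw
  set V : ℝ := (v : ℝ) with hVdef
  set W : ℝ := (w : ℝ) with hWdef
  have hVW : 0 < V + W := by linarith
  set c : ℝ := (W * a + V * (z - b)) / (V + W) with hc
  set k : ℝ := (V + W) / (2 * V * W) with hk
  have hkpos : 0 < k := by positivity
  have hpt : ∀ x : ℝ, gaussianPDFReal a v x * gaussianPDFReal b w (z - x)
      = ((√(2 * π * V))⁻¹ * (√(2 * π * W))⁻¹ * rexp (-(z - (a + b))^2 / (2 * (V + W))))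
        * rexp (-k * (x - c)^2) := by
    intro x
    simp only [gaussianPDFReal, ← hVdef, ← hWdef]
    rw [mul_mul_mul_comm, ← Real.exp_add]
    rw [show (-(x - a) ^ 2 / (2 * V) + -(z - x - b) ^ 2 / (2 * W))
        = (-(z - (a + b)) ^ 2 / (2 * (V + W)) + -k * (x - c) ^ 2) from by
      rw [hk, hc]; field_simp; ring, Real.exp_add]
    ring
  rw [integral_congr_ae (Filter.Eventually.of_forall hpt), integral_const_mul]
  have hshift : ∫ x : ℝ, rexp (-k * (x - c)^2) = ∫ x : ℝ, rexp (-k * x^2) :=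
    integral_sub_right_eq_self (fun y => rexp (-k * y^2)) c
  rw [hshift, integral_gaussian]
  rw [mul_right_comm, sqrt_const_ident V W hV hW]
  simp only [gaussianPDFReal, NNReal.coe_add, ← hVdef, ← hWdef]

lemma integrable_gauss_conv (a b : ℝ) (v w : ℝ≥0) (z : ℝ) :
    Integrable (fun x => gaussianPDFReal a v x * gaussianPDFReal b w (z - x)) volume := by
  refine Integrable.mono' ((integrable_gaussianPDFReal a v).const_mul ((√(2 * π * w))⁻¹))
    ?_ (Filter.Eventually.of_forall fun x => ?_)
  · exact ((measurable_gaussianPDFReal a v).mul ((measurable_gaussianPDFReal b w).comp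
      (measurable_const.sub measurable_id))).aestronglyMeasurable
  · rw [Real.norm_eq_abs, abs_of_nonneg (mul_nonneg (gaussianPDFReal_nonneg a v x)
      (gaussianPDFReal_nonneg b w _)), mul_comm ((√(2 * π * ↑w))⁻¹) _]
    refine mul_le_mul_of_nonneg_left ?_ (gaussianPDFReal_nonneg a v x)
    unfold gaussianPDFReal
    calc (√(2 * π * ↑w))⁻¹ * rexp (-(z - x - b) ^ 2 / (2 * ↑w))
        ≤ (√(2 * π * ↑w))⁻¹ * 1 := by
          refine mul_le_mul_of_nonneg_left ?_ (by positivity)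
          exact Real.exp_le_one_iff.2 (div_nonpos_of_nonpos_of_nonneg
            (neg_nonpos.2 (sq_nonneg _)) (by positivity))
      _ = (√(2 * π * ↑w))⁻¹ := mul_one _

lemma gaussianPDF_conv (a b : ℝ) (v w : ℝ≥0) (hv : v ≠ 0) (hw : w ≠ 0) (z : ℝ) :
    ∫⁻ x, gaussianPDF a v x * gaussianPDF b w (z - x) = gaussianPDF (a + b) (v + w) z := by
  simp_rw [gaussianPDF_def, ← ENNReal.ofReal_mul (gaussianPDFReal_nonneg a v _)]
  rw [← ofReal_integral_eq_lintegral_ofReal (integrable_gauss_conv a b v w z)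
    (Filter.Eventually.of_forall fun x => mul_nonneg (gaussianPDFReal_nonneg a v x)
      (gaussianPDFReal_nonneg b w _)),
    gaussianPDFReal_conv a b v w hv hw z]

lemma gaussianReal_conv (a b : ℝ) (v w : ℝ≥0) (hv : v ≠ 0) (hw : w ≠ 0) :
    Measure.map (fun p : ℝ × ℝ => p.1 + p.2) ((gaussianReal a v).prod (gaussianReal b w))
      = gaussianReal (a + b) (v + w) := by
  have hvw : v + w ≠ 0 := by simp [hv]
  refine Measure.ext_of_Iic _ _ (fun q => ?_)
  rw [Measure.map_apply measurable_add measurableSet_Iic,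
    Measure.prod_apply (measurable_add measurableSet_Iic)]
  have hsec : ∀ x : ℝ, (Prod.mk x ⁻¹' ((fun p : ℝ × ℝ => p.1 + p.2) ⁻¹' Set.Iic q))
      = Set.Iic (q - x) := by
    intro x; ext y
    simp [le_sub_iff_add_le']
  simp_rw [hsec]
  have hrw : ∀ x : ℝ, gaussianReal b w (Set.Iic (q - x))
      = ∫⁻ z in Set.Iic q, gaussianPDF b w (z - x) := by
    intro x
    calc gaussianReal b w (Set.Iic (q - x))
        = ∫⁻ y, (Set.Iic (q - x)).indicator (gaussianPDF b w) y := by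
          rw [gaussianReal_apply b hw, ← lintegral_indicator measurableSet_Iic _]
      _ = ∫⁻ y, ((Set.Iic q).indicator (fun z => gaussianPDF b w (z - x))) (y + x) := by
          congr 1; ext y
          by_cases h : y ≤ q - x
          · simp [Set.indicator_apply, Set.mem_Iic, h, show y + x ≤ q by linarith]
          · simp [Set.indicator_apply, Set.mem_Iic, h,
              show ¬ (y + x ≤ q) from fun hh => h (by linarith)]
      _ = ∫⁻ z, (Set.Iic q).indicator (fun z => gaussianPDF b w (z - x)) z :=
          lintegral_add_right_eq_self _ x
      _ = ∫⁻ z in Set.Iic q, gaussianPDF b w (z - x) :=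
          lintegral_indicator measurableSet_Iic _
  simp_rw [hrw]
  rw [gaussianReal_of_var_ne_zero a hv,
    lintegral_withDensity_eq_lintegral_mul_non_measurable _ (measurable_gaussianPDF a v)
      (Filter.Eventually.of_forall fun x => ENNReal.ofReal_lt_top)]
  simp only [Pi.mul_apply]
  have hpull : ∀ x : ℝ, gaussianPDF a v x * ∫⁻ z in Set.Iic q, gaussianPDF b w (z - x)
      = ∫⁻ z in Set.Iic q, gaussianPDF a v x * gaussianPDF b w (z - x) :=
    fun x => (lintegral_const_mul _ ((measurable_gaussianPDF b w).comp
      (measurable_id.sub_const x))).symm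
  simp_rw [hpull]
  rw [lintegral_lintegral_swap]
  · have : ∀ z : ℝ, ∫⁻ x, gaussianPDF a v x * gaussianPDF b w (z - x)
        = gaussianPDF (a + b) (v + w) z := fun z => gaussianPDF_conv a b v w hv hw z
    simp_rw [this]
    rw [gaussianReal_apply _ hvw]
  · exact (((measurable_gaussianPDF a v).comp measurable_fst).mul
      ((measurable_gaussianPDF b w).comp (measurable_snd.sub measurable_fst))).aemeasurable


lemma aux_nnreal_sq (v : ℝ≥0) : (⟨(Real.sqrt v)^2, sq_nonneg _⟩ : ℝ≥0) * 1 = v := by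
  ext
  simp [Real.sq_sqrt v.coe_nonneg]

/-- Scaling: Iic-value of a Gaussian in terms of the standard Gaussian. -/
lemma gaussianReal_Iic_eq (M : ℝ) (v : ℝ≥0) (hv : v ≠ 0) (c : ℝ) :
    gaussianReal M v (Set.Iic c) = gaussianReal 0 1 (Set.Iic ((c - M) / Real.sqrt v)) := by
  have hvpos : 0 < (v : ℝ) := lt_of_le_of_ne v.coe_nonneg (by exact_mod_cast (Ne.symm hv))
  have hs : 0 < Real.sqrt v := Real.sqrt_pos.2 hvpos
  have hmap : (gaussianReal 0 1).map (fun x => Real.sqrt v * x + M) = gaussianReal M v := by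
    have h1 : (gaussianReal (0:ℝ) 1).map (fun x => Real.sqrt v * x) = gaussianReal 0 v := by
      have := gaussianReal_map_const_mul (μ := (0:ℝ)) (v := 1) (Real.sqrt v)
      simpa [aux_nnreal_sq v] using this
    have : (fun x : ℝ => Real.sqrt v * x + M) = (· + M) ∘ (fun x => Real.sqrt v * x) := rfl
    rw [this, ← Measure.map_map (measurable_id'.add_const M) (measurable_const_mul _), h1,
      gaussianReal_map_add_const M, zero_add]
  rw [← hmap, Measure.map_apply (by fun_prop) measurableSet_Iic]
  congr 1
  ext x
  simp only [Set.mem_preimage, Set.mem_Iic]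
  rw [le_div_iff₀ hs]
  constructor <;> intro h <;> nlinarith

lemma stdCDF_zero : stdCDF 0 = 1 / 2 := by
  set m := gaussianReal (0:ℝ) 1 with hm
  have hmap : m.map (fun x : ℝ => (-1 : ℝ) * x) = m := by
    have := gaussianReal_map_const_mul (μ := (0:ℝ)) (v := 1) (-1)
    simpa [show (⟨(-1:ℝ)^2, sq_nonneg _⟩ : ℝ≥0) * 1 = 1 by ext; norm_num] using this
  have h1 : m (Set.Iic 0) = m (Set.Ici 0) := by
    conv_lhs => rw [← hmap, Measure.map_apply (by fun_prop) measurableSet_Iic]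
    congr 1
    ext x
    simp
  have h0 : m {(0:ℝ)} = 0 :=
    gaussianReal_absolutelyContinuous 0 one_ne_zero (measure_singleton 0)
  have h2 : m (Set.Ici (0:ℝ)) = m (Set.Ioi 0) := by
    rw [← Set.Ioi_union_left]
    exact le_antisymm ((measure_union_le _ _).trans (by rw [h0, add_zero]))
      (measure_mono Set.subset_union_left)
  have h3 : m (Set.Iic (0:ℝ)) + m (Set.Ioi 0) = 1 := by
    rw [← measure_union (Set.Iic_disjoint_Ioi le_rfl) measurableSet_Ioi, Set.Iic_union_Ioi,
      measure_univ]
  have hne : m (Set.Iic (0:ℝ)) ≠ ⊤ := measure_ne_top m _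
  have hne2 : m (Set.Ioi (0:ℝ)) ≠ ⊤ := measure_ne_top m _
  have := congrArg ENNReal.toReal h3
  rw [ENNReal.toReal_add hne hne2, ENNReal.toReal_one] at this
  have heq : (m (Set.Iic (0:ℝ))).toReal = (m (Set.Ioi 0)).toReal := by
    rw [h1, h2]
  unfold stdCDF
  rw [← hm]
  linarith

/-- Gaussian tail bound: Φ(-x) ≤ (1/2)·exp(-x²/2) for x ≥ 0. -/
lemma stdCDF_neg_le (x : ℝ) (hx : 0 ≤ x) : stdCDF (-x) ≤ 1 / 2 * rexp (-x ^ 2 / 2) := by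
  have h1 : stdCDF (-x) = ∫ u in Set.Iic (-x), gaussianPDFReal 0 1 u := by
    unfold stdCDF
    rw [gaussianReal_apply_eq_integral 0 one_ne_zero, ENNReal.toReal_ofReal
      (setIntegral_nonneg measurableSet_Iic fun u _ => gaussianPDFReal_nonneg 0 1 u)]
  rw [h1]
  have key : ∫ u in Set.Iic (-x), gaussianPDFReal 0 1 u
      ≤ ∫ u in Set.Iic (-x), rexp (-x^2/2) * gaussianPDFReal 0 1 (u + x) := by
    refine setIntegral_mono_on ((integrable_gaussianPDFReal 0 1).restrict)
      ((((integrable_gaussianPDFReal 0 1).comp_add_right x).const_mul _).restrict)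
      measurableSet_Iic (fun u hu => ?_)
    have hu' : u ≤ -x := Set.mem_Iic.1 hu
    unfold gaussianPDFReal
    rw [mul_left_comm]
    refine mul_le_mul_of_nonneg_left ?_ (by positivity)
    rw [← Real.exp_add, Real.exp_le_exp]
    push_cast
    have : x * (x + u) ≤ 0 := mul_nonpos_of_nonneg_of_nonpos hx (by linarith)
    nlinarith
  refine key.trans ?_
  rw [integral_const_mul]
  have h2 : ∫ u in Set.Iic (-x), gaussianPDFReal 0 1 (u + x)
      = ∫ u in Set.Iic 0, gaussianPDFReal 0 1 u := by
    rw [← integral_indicator measurableSet_Iic, ← integral_indicator measurableSet_Iic]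
    have : ∀ u : ℝ, (Set.Iic (-x)).indicator (fun u => gaussianPDFReal 0 1 (u + x)) u
        = ((Set.Iic (0:ℝ)).indicator (gaussianPDFReal 0 1)) (u + x) := by
      intro u
      by_cases h : u ≤ -x
      · simp [Set.indicator_apply, Set.mem_Iic, h, show u + x ≤ 0 by linarith]
      · simp [Set.indicator_apply, Set.mem_Iic, h, show ¬ (u + x ≤ 0) from fun hh => h (by linarith)]
    rw [integral_congr_ae (Filter.Eventually.of_forall this),
      integral_add_right_eq_self ((Set.Iic (0:ℝ)).indicator (gaussianPDFReal 0 1)) x]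
  rw [h2]
  have h3 : ∫ u in Set.Iic (0:ℝ), gaussianPDFReal 0 1 u = stdCDF 0 := by
    unfold stdCDF
    rw [gaussianReal_apply_eq_integral 0 one_ne_zero, ENNReal.toReal_ofReal
      (setIntegral_nonneg measurableSet_Iic fun u _ => gaussianPDFReal_nonneg 0 1 u)]
  rw [h3, stdCDF_zero]
  ring_nf
  exact le_rfl

lemma stdCDF_nonneg (x : ℝ) : 0 ≤ stdCDF x := ENNReal.toReal_nonneg

lemma geom_sum_Icc (r : ℝ) (hr1 : r ≠ 1) (n : ℕ) :
    ∑ m ∈ Finset.Icc 1 n, r ^ m = (r - r ^ (n + 1)) / (1 - r) := by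
  have h1r : (1 : ℝ) - r ≠ 0 := fun h => hr1 (by linarith)
  induction n with
  | zero =>
    rw [Finset.Icc_eq_empty (by norm_num), Finset.sum_empty, pow_one, sub_self, zero_div]
  | succ n ih =>
    rw [Finset.sum_Icc_succ_top (Nat.succ_le_succ (Nat.zero_le n)), ih]
    field_simp
    ring

/-- Geometric tail bound. -/
lemma geom_tail (r : ℝ) (hr0 : 0 < r) (hr1 : r < 1) (n : ℕ) :
    ∑ m ∈ Finset.Icc 1 n, (1 / 2) * r ^ m ≤ 1 / 2 * r / (1 - r) := by
  rw [← Finset.mul_sum, geom_sum_Icc r (ne_of_lt hr1) n, mul_div_assoc]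
  have h := pow_nonneg hr0.le (n + 1)
  gcongr
  · linarith

lemma map_add_of_indep {Ω : Type*} [MeasurableSpace Ω] {P : Measure Ω} [IsProbabilityMeasure P]
    {Y Z : Ω → ℝ} (hY : Measurable Y) (hZ : Measurable Z) (h : IndepFun Y Z P)
    {a b : ℝ} {v w : ℝ≥0} (hv : v ≠ 0) (hw : w ≠ 0)
    (hlY : Measure.map Y P = gaussianReal a v) (hlZ : Measure.map Z P = gaussianReal b w) :
    Measure.map (Y + Z) P = gaussianReal (a + b) (v + w) := by
  have hpair : Measure.map (fun ω => (Y ω, Z ω)) P = (Measure.map Y P).prod (Measure.map Z P) :=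
    (ProbabilityTheory.indepFun_iff_map_prod_eq_prod_map_map hY.aemeasurable hZ.aemeasurable).1 h
  have hcomp : (Y + Z) = (fun p : ℝ × ℝ => p.1 + p.2) ∘ (fun ω => (Y ω, Z ω)) := rfl
  rw [hcomp, ← Measure.map_map measurable_add (hY.prodMk hZ), hpair, hlY, hlZ,
    gaussianReal_conv a b v w hv hw]

lemma map_sum_Ioc (τ t : ℕ) (μ σ : ℝ) (hσ : 0 < σ)
    {Ω : Type*} [MeasurableSpace Ω] (P : Measure Ω) [IsProbabilityMeasure P]
    (X : ℕ → Ω → ℝ) (hXmeas : ∀ i, Measurable (X i))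
    (hindep : iIndepFun (fun i : ↥(Set.Ioc τ t) => X (i : ℕ)) P)
    (hlaw : ∀ i, τ < i → i ≤ t → Measure.map (X i) P = gaussianReal μ ((σ ^ 2).toNNReal))
    (m : ℕ) (hm : 1 ≤ m) (hmt : τ + m ≤ t) :
    Measure.map (fun ω => ∑ i ∈ Finset.Ioc τ (τ + m), X i ω) P
      = gaussianReal (m * μ) (((m : ℝ) * σ ^ 2).toNNReal) := by
  classical
  induction m with
  | zero => omega
  | succ m ih =>
    by_cases hm0 : m = 0
    · subst hm0
      have : Finset.Ioc τ (τ + 1) = {τ + 1} := Nat.Ioc_succ_singleton τ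
      simp only [this, Finset.sum_singleton]
      rw [hlaw (τ + 1) (by omega) (by omega)]
      norm_num
    · have hm1 : 1 ≤ m := Nat.one_le_iff_ne_zero.2 hm0
      have hmt' : τ + m ≤ t := by omega
      have law_m := ih hm1 hmt'
      -- independence
      set f : ↥(Set.Ioc τ t) → Ω → ℝ := fun i => X (i : ℕ) with hf
      set s : Finset ↥(Set.Ioc τ t) := Finset.univ.filter (fun i => (i : ℕ) ≤ τ + m) with hs
      have hj : τ + m + 1 ∈ Set.Ioc τ t := ⟨by omega, by omega⟩
      have hjs : (⟨τ + m + 1, hj⟩ : ↥(Set.Ioc τ t)) ∉ s := by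
        simp only [hs, Finset.mem_filter, Finset.mem_univ, true_and]
        omega
      have hind2 : IndepFun (∑ i ∈ s, f i) (f ⟨τ + m + 1, hj⟩) P :=
        hindep.indepFun_finsetSum_of_notMem (fun i => hXmeas i) hjs
      have hsum_eq : (∑ i ∈ s, f i) = fun ω => ∑ i ∈ Finset.Ioc τ (τ + m), X i ω := by
        funext ω
        rw [Finset.sum_apply]
        have hinj : ∀ x ∈ s, ∀ y ∈ s, (x : ℕ) = (y : ℕ) → x = y :=
          fun x _ y _ h => Subtype.ext h
        have himg : s.image (fun i : ↥(Set.Ioc τ t) => (i : ℕ)) = Finset.Ioc τ (τ + m) := by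
          ext b
          simp only [Finset.mem_image, hs, Finset.mem_filter, Finset.mem_univ, true_and,
            Finset.mem_Ioc]
          constructor
          · rintro ⟨a, ha, rfl⟩
            exact ⟨a.2.1, ha⟩
          · intro hb
            exact ⟨⟨b, ⟨hb.1, by omega⟩⟩, hb.2, rfl⟩
        rw [← himg, Finset.sum_image hinj]
      have hYmeas : Measurable (fun ω => ∑ i ∈ Finset.Ioc τ (τ + m), X i ω) :=
        Finset.measurable_sum _ fun i _ => hXmeas i
      rw [hsum_eq] at hind2
      have hv : (((m : ℝ) * σ ^ 2).toNNReal) ≠ 0 := by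
        simp only [ne_eq, Real.toNNReal_eq_zero, not_le]
        have : (0:ℝ) < m := by exact_mod_cast hm1
        positivity
      have hw : ((σ ^ 2).toNNReal) ≠ 0 := by
        simp only [ne_eq, Real.toNNReal_eq_zero, not_le]
        positivity
      have hstep := map_add_of_indep hYmeas (hXmeas (τ + m + 1)) hind2 hv hw law_m
        (hlaw (τ + m + 1) (by omega) (by omega))
      have hsplit : ((fun ω => ∑ i ∈ Finset.Ioc τ (τ + m), X i ω) + X (τ + m + 1))
          = fun ω => ∑ i ∈ Finset.Ioc τ (τ + (m + 1)), X i ω := by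
        funext ω
        rw [show τ + (m + 1) = (τ + m) + 1 by omega,
          Finset.sum_Ioc_succ_top (Nat.le_add_right τ m)]
        rfl
      rw [hsplit] at hstep
      rw [hstep]
      congr 1
      · push_cast; ring
      · rw [← Real.toNNReal_add (by positivity) (by positivity)]
        congr 1
        push_cast; ring

/-- If X_{τ+1},…,X_t are i.i.d. N(μ,σ²), then
P(max_{τ≤k≤t} V_{t,k} ≥ V_{t,τ} + ε) ≤ Σ_{m=1}^{t−τ} Φ(−μ√m/(2σ))
  ≤ (1/2)·e^{−μ²/(8σ²)}/(1 − e^{−μ²/(8σ²)}). -/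
theorem statement16 (μ σ ε : ℝ) (hμ : 0 < μ) (hσ : 0 < σ) (hε : 0 < ε)
    (τ t : ℕ) (hτt : τ ≤ t)
    (Ω : Type*) [MeasurableSpace Ω] (P : Measure Ω) [IsProbabilityMeasure P]
    (X : ℕ → Ω → ℝ) (hXmeas : ∀ i, Measurable (X i))
    (hindep : iIndepFun (fun i : ↥(Set.Ioc τ t) => X (i : ℕ)) P)
    (hlaw : ∀ i, τ < i → i ≤ t → Measure.map (X i) P = gaussianReal μ ((σ ^ 2).toNNReal)) :
    (P {ω | cusumV μ (fun i => X i ω) t τ + ε ≤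
        ⨆ k : (Finset.Icc τ t : Finset ℕ), cusumV μ (fun i => X i ω) t (k : ℕ)}).toReal ≤
      ∑ m ∈ Finset.Icc 1 (t - τ), stdCDF (-(μ * Real.sqrt (m : ℝ)) / (2 * σ))
    ∧ ∑ m ∈ Finset.Icc 1 (t - τ), stdCDF (-(μ * Real.sqrt (m : ℝ)) / (2 * σ)) ≤
        (1 / 2) * Real.exp (-μ ^ 2 / (8 * σ ^ 2)) / (1 - Real.exp (-μ ^ 2 / (8 * σ ^ 2))) := by
  classical
  set n := t - τ with hn
  -- the events
  set A : ℕ → Set Ω := fun m =>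
    (fun ω => ∑ i ∈ Finset.Ioc τ (τ + m), X i ω) ⁻¹' (Set.Iic (μ * m / 2)) with hA
  -- difference identity
  have hdiff : ∀ (ω : Ω) (m : ℕ),
      cusumV μ (fun i => X i ω) t (τ + m) - cusumV μ (fun i => X i ω) t τ
      = (μ / 2 * m - (∑ i ∈ Finset.Ioc τ (τ + m), X i ω)) * μ := by
    intro ω m
    have hps : pS (fun i => X i ω) (τ + m)
        = pS (fun i => X i ω) τ + ∑ i ∈ Finset.Ioc τ (τ + m), X i ω := by
      unfold pS
      have h01 : ∀ b : ℕ, Finset.Icc 1 b = Finset.Ioc 0 b := fun b => Finset.Icc_add_one_left_eq_Ioc 0 b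
      rw [h01, h01, ← Finset.sum_Ioc_consecutive _ (Nat.zero_le τ) (Nat.le_add_right τ m)]
    unfold cusumV
    rw [hps]
    push_cast
    ring
  -- subset into union
  have hsub : {ω | cusumV μ (fun i => X i ω) t τ + ε ≤
        ⨆ k : (Finset.Icc τ t : Finset ℕ), cusumV μ (fun i => X i ω) t (k : ℕ)}
      ⊆ ⋃ m ∈ Finset.Icc 1 n, A m := by
    intro ω hω
    simp only [Set.mem_setOf_eq] at hω
    have hne : Nonempty ((Finset.Icc τ t : Finset ℕ) : Type) :=
      ⟨⟨τ, Finset.mem_Icc.2 ⟨le_rfl, hτt⟩⟩⟩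
    obtain ⟨k, hk⟩ := exists_eq_ciSup_of_finite
      (f := fun k : (Finset.Icc τ t : Finset ℕ) => cusumV μ (fun i => X i ω) t (k : ℕ))
    have hk2 : cusumV μ (fun i => X i ω) t τ + ε ≤ cusumV μ (fun i => X i ω) t (k : ℕ) := by
      rw [hk]; exact hω
    have hkmem : τ ≤ (k : ℕ) ∧ (k : ℕ) ≤ t := Finset.mem_Icc.1 k.2
    set m := (k : ℕ) - τ with hm
    have hk1 : (k : ℕ) = τ + m := by omega
    have hm1 : 1 ≤ m := by
      by_contra h
      have hk0 : (k : ℕ) = τ := by omega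
      rw [hk0] at hk2
      linarith
    refine Set.mem_iUnion₂.2 ⟨m, Finset.mem_Icc.2 ⟨hm1, by omega⟩, ?_⟩
    rw [hk1] at hk2
    have hd := hdiff ω m
    have hY : (μ / 2 * m - (∑ i ∈ Finset.Ioc τ (τ + m), X i ω)) * μ ≥ ε := by linarith
    have : ∑ i ∈ Finset.Ioc τ (τ + m), X i ω ≤ μ * m / 2 := by
      nlinarith
    exact Set.mem_preimage.2 (Set.mem_Iic.2 this)
  -- value of each event
  have hval : ∀ m ∈ Finset.Icc 1 n,
      (P (A m)).toReal = stdCDF (-(μ * Real.sqrt (m : ℝ)) / (2 * σ)) := by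
    intro m hm
    rw [Finset.mem_Icc] at hm
    have hYmeas : Measurable (fun ω => ∑ i ∈ Finset.Ioc τ (τ + m), X i ω) :=
      Finset.measurable_sum _ fun i _ => hXmeas i
    have hmap := map_sum_Ioc τ t μ σ hσ P X hXmeas hindep hlaw m hm.1 (by omega)
    have h1 : P (A m) = (Measure.map (fun ω => ∑ i ∈ Finset.Ioc τ (τ + m), X i ω) P)
        (Set.Iic (μ * m / 2)) := by
      rw [Measure.map_apply hYmeas measurableSet_Iic]
    have hv : (((m : ℝ) * σ ^ 2).toNNReal) ≠ 0 := by
      simp only [ne_eq, Real.toNNReal_eq_zero, not_le]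
      have : (0:ℝ) < m := by exact_mod_cast hm.1
      positivity
    have hmpos : (0:ℝ) < m := by exact_mod_cast hm.1
    have hcoe : ((((m : ℝ) * σ ^ 2).toNNReal : ℝ≥0) : ℝ) = (m : ℝ) * σ ^ 2 :=
      Real.coe_toNNReal _ (by positivity)
    have hsm : Real.sqrt (m : ℝ) * Real.sqrt (m : ℝ) = (m : ℝ) :=
      Real.mul_self_sqrt (le_of_lt hmpos)
    have hsmpos : 0 < Real.sqrt (m : ℝ) := Real.sqrt_pos.2 hmpos
    have hargs : (μ * (m:ℝ) / 2 - (m:ℝ) * μ) / Real.sqrt ((((m : ℝ) * σ ^ 2).toNNReal : ℝ≥0) : ℝ)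
        = -(μ * Real.sqrt (m : ℝ)) / (2 * σ) := by
      rw [hcoe, Real.sqrt_mul (le_of_lt hmpos), Real.sqrt_sq hσ.le,
        div_eq_div_iff (by positivity) (by positivity)]
      linear_combination (μ * σ) * hsm
    rw [h1, hmap, gaussianReal_Iic_eq _ _ hv, hargs]
    rfl
  -- first inequality
  have hunion : P {ω | cusumV μ (fun i => X i ω) t τ + ε ≤
        ⨆ k : (Finset.Icc τ t : Finset ℕ), cusumV μ (fun i => X i ω) t (k : ℕ)}
      ≤ ∑ m ∈ Finset.Icc 1 n, P (A m) :=
    le_trans (measure_mono hsub) (measure_biUnion_finset_le _ _)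
  have hfin : ∑ m ∈ Finset.Icc 1 n, P (A m) ≠ ⊤ :=
    (ENNReal.sum_lt_top.2 fun m _ => measure_lt_top P _).ne
  constructor
  · calc (P _).toReal ≤ (∑ m ∈ Finset.Icc 1 n, P (A m)).toReal :=
          ENNReal.toReal_mono hfin hunion
      _ = ∑ m ∈ Finset.Icc 1 n, (P (A m)).toReal := ENNReal.toReal_sum fun m _ => measure_ne_top _ _
      _ = ∑ m ∈ Finset.Icc 1 n, stdCDF (-(μ * Real.sqrt (m : ℝ)) / (2 * σ)) :=
          Finset.sum_congr rfl hval
  · -- second inequality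
    set r : ℝ := rexp (-μ ^ 2 / (8 * σ ^ 2)) with hr
    have hr0 : 0 < r := Real.exp_pos _
    have hr1 : r < 1 := by
      rw [hr, Real.exp_lt_one_iff]
      have : 0 < μ ^ 2 / (8 * σ ^ 2) := by positivity
      rw [neg_div]
      linarith
    have hterm : ∀ m ∈ Finset.Icc 1 n, stdCDF (-(μ * Real.sqrt (m : ℝ)) / (2 * σ))
        ≤ (1 / 2) * r ^ m := by
      intro m hm
      rw [Finset.mem_Icc] at hm
      have hmpos : (0:ℝ) < m := by exact_mod_cast hm.1
      have hx : 0 ≤ μ * Real.sqrt (m : ℝ) / (2 * σ) := by positivity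
      have heq : -(μ * Real.sqrt (m : ℝ)) / (2 * σ) = -(μ * Real.sqrt (m : ℝ) / (2 * σ)) := by
        ring
      rw [heq]
      refine le_trans (stdCDF_neg_le _ hx) ?_
      have hsq : (μ * Real.sqrt (m : ℝ) / (2 * σ)) ^ 2 = μ ^ 2 * m / (4 * σ ^ 2) := by
        rw [div_pow, mul_pow, Real.sq_sqrt (le_of_lt hmpos)]
        ring
      rw [hsq]
      have hexp : rexp (-(μ ^ 2 * m / (4 * σ ^ 2)) / 2) = r ^ m := by
        rw [hr, ← Real.exp_nat_mul]
        congr 1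
        field_simp
        ring
      rw [hexp]
    calc ∑ m ∈ Finset.Icc 1 n, stdCDF (-(μ * Real.sqrt (m : ℝ)) / (2 * σ))
        ≤ ∑ m ∈ Finset.Icc 1 n, (1 / 2) * r ^ m := Finset.sum_le_sum hterm
      _ ≤ 1 / 2 * r / (1 - r) := geom_tail r hr0 hr1 n

end
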